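/- If a rational matrix R is the sum R1 + R2 of two rational matrices whose first determinantal denominators φ_1(R1) and φ_1(R2) are coprime polynomials, then φ_ℓ(R) = φ_ℓ(R1)·φ_ℓ(R2) for all ℓ. -/

import Mathlib

open Polynomial

noncomputable section

/-- Normalization on a field: every nonzero element normalizes to `1`. -/
noncomputable def fieldNormalizationMonoid (K : Type*) [Field K] : NormalizationMonoid K := by
  classical
  exact
  { normUnit := fun a => if h : a = 0 then 1 else (Units.mk0 a h)⁻¹
    normUnit_zero := dif_pos rfl
    normUnit_one := by
      rw [dif_neg one_ne_zero]
      exact Units.ext (by simp)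
    normUnit_mul_units := fun {a} u ha => by
      rw [dif_neg (mul_ne_zero ha u.ne_zero), dif_neg ha]
      exact Units.ext (by simp [mul_comm]) }

attribute [local instance] fieldNormalizationMonoid

noncomputable local instance (K : Type*) [Field K] : NormalizedGCDMonoid (Polynomial K) :=
  UniqueFactorizationMonoid.toNormalizedGCDMonoid _

variable {k : Type*} [Field k] [CharZero k]

/-- The ℓ-th determinantal denominator of a rational matrix: the monic least common
denominator of all minors of size at most ℓ. -/
def detDen {n p : ℕ} (R : Matrix (Fin n) (Fin p) (RatFunc k)) (ℓ : ℕ) : Polynomial k :=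
  (Finset.range (ℓ + 1)).lcm fun i =>
    (Finset.univ : Finset ((Fin i ↪ Fin n) × (Fin i ↪ Fin p))).lcm fun fg =>
      (Matrix.det fun a b => R (fg.1 a) (fg.2 b)).denom

section Aux

/-- If both summands can be written with common denominator `D`, so can the sum. -/
lemma denom_add_dvd_of_dvd {x y : RatFunc k} {D : Polynomial k} (hD : D ≠ 0)
    (hx : x.denom ∣ D) (hy : y.denom ∣ D) : (x + y).denom ∣ D := by
  obtain ⟨px, rfl⟩ := (RatFunc.denom_dvd hD).mp hx
  obtain ⟨py, rfl⟩ := (RatFunc.denom_dvd hD).mp hy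
  rw [← add_div, ← map_add]
  exact RatFunc.denom_div_dvd _ _

lemma denom_sum_dvd {ι : Type*} (s : Finset ι) (f : ι → RatFunc k) {D : Polynomial k}
    (hD : D ≠ 0) (h : ∀ i ∈ s, (f i).denom ∣ D) : (∑ i ∈ s, f i).denom ∣ D := by
  classical
  induction s using Finset.induction_on with
  | empty => simp
  | insert a s' hx ih =>
    rw [Finset.sum_insert hx]
    exact denom_add_dvd_of_dvd hD (h a (Finset.mem_insert_self _ _))
      (ih fun i hi => h i (Finset.mem_insert_of_mem hi))

lemma denom_algebraMap_mul_dvd (p : Polynomial k) (x : RatFunc k) :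
    (algebraMap (Polynomial k) (RatFunc k) p * x).denom ∣ x.denom := by
  conv_lhs => rw [← RatFunc.num_div_denom x, ← mul_div_assoc, ← map_mul]
  exact RatFunc.denom_div_dvd _ _

lemma denom_neg' (x : RatFunc k) : (-x).denom = x.denom := by
  have key : ∀ y : RatFunc k, (-y).denom ∣ y.denom := by
    intro y
    have := denom_algebraMap_mul_dvd (-1 : Polynomial k) y
    simpa [neg_one_mul] using this
  refine dvd_antisymm_of_normalize_eq ((RatFunc.monic_denom _).normalize_eq_self)
    ((RatFunc.monic_denom _).normalize_eq_self) (key x) ?_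
  simpa using key (-x)

lemma denom_minor_dvd {n p : ℕ} (R : Matrix (Fin n) (Fin p) (RatFunc k)) {ℓ i : ℕ}
    (hi : i ≤ ℓ) (f : Fin i ↪ Fin n) (g : Fin i ↪ Fin p) :
    (Matrix.det fun a b => R (f a) (g b)).denom ∣ detDen R ℓ := by
  refine dvd_trans ?_ (Finset.dvd_lcm (Finset.mem_range.mpr (Nat.lt_succ_of_le hi)))
  have := Finset.dvd_lcm (f := fun fg : (Fin i ↪ Fin n) × (Fin i ↪ Fin p) =>
    (Matrix.det fun a b => R (fg.1 a) (fg.2 b)).denom)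
    (Finset.mem_univ (⟨f, g⟩ : (Fin i ↪ Fin n) × (Fin i ↪ Fin p)))
  exact this

lemma detDen_entry_dvd {n p : ℕ} (R : Matrix (Fin n) (Fin p) (RatFunc k)) (r : Fin n)
    (c : Fin p) : (R r c).denom ∣ detDen R 1 := by
  have h := denom_minor_dvd R (le_refl 1)
    (⟨fun _ => r, fun _ _ _ => Subsingleton.elim _ _⟩ : Fin 1 ↪ Fin n)
    (⟨fun _ => c, fun _ _ _ => Subsingleton.elim _ _⟩ : Fin 1 ↪ Fin p)
  erw [Matrix.det_fin_one] at h
  exact h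

lemma detDen_ne_zero {n p : ℕ} (R : Matrix (Fin n) (Fin p) (RatFunc k)) (ℓ : ℕ) :
    detDen R ℓ ≠ 0 := by
  intro h
  obtain ⟨i, -, hi⟩ := Set.mem_image _ _ _ |>.mp (Finset.lcm_eq_zero_iff.mp h)
  obtain ⟨fg, -, hfg⟩ := Set.mem_image _ _ _ |>.mp (Finset.lcm_eq_zero_iff.mp hi)
  exact RatFunc.denom_ne_zero _ hfg

lemma normalize_detDen {n p : ℕ} (R : Matrix (Fin n) (Fin p) (RatFunc k)) (ℓ : ℕ) :
    normalize (detDen R ℓ) = detDen R ℓ :=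
  Finset.normalize_lcm

/-- Core lemma: bound on the denominator of the determinant of a "mixed" matrix whose
columns in `S` come from `U` and whose other columns have the form `U + W` with the
entries of `W` having denominators dividing `e`, while all minors of `U` have
denominators dividing `d`. -/
lemma denom_det_mix_dvd (d e : Polynomial k) (hd : d ≠ 0) (he : e ≠ 0) :
    ∀ (m t : ℕ) (U W : Matrix (Fin m) (Fin m) (RatFunc k)) (S : Finset (Fin m)),
      Sᶜ.card ≤ t →
      (∀ r j, (W r j).denom ∣ e) →
      (∀ (i : ℕ) (f g : Fin i ↪ Fin m),
        (Matrix.det fun a b => U (f a) (g b)).denom ∣ d) →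
      (Matrix.det fun r j => if j ∈ S then U r j else U r j + W r j).denom ∣ d * e ^ m := by
  intro m
  induction m with
  | zero =>
    intro t U W S _ _ _
    erw [Matrix.det_fin_zero]
    simp
  | succ m ih =>
    have hbase : ∀ (U W : Matrix (Fin (m + 1)) (Fin (m + 1)) (RatFunc k)),
        (∀ (i : ℕ) (f g : Fin i ↪ Fin (m + 1)),
          (Matrix.det fun a b => U (f a) (g b)).denom ∣ d) →
        (Matrix.det fun r j =>
          if j ∈ (Finset.univ : Finset (Fin (m + 1))) then U r j else U r j + W r j).denom ∣
          d * e ^ (m + 1) := by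
      intro U W hU
      have hM : (fun r j => if j ∈ (Finset.univ : Finset (Fin (m + 1))) then U r j
          else U r j + W r j) = fun r j => U r j := by
        funext r j; simp
      rw [hM]
      exact dvd_mul_of_dvd_left
        (hU (m + 1) (Function.Embedding.refl _) (Function.Embedding.refl _)) _
    intro t
    induction t with
    | zero =>
      intro U W S hS hW hU
      have hSu : S = Finset.univ := by
        have h0 : Sᶜ = ∅ := Finset.card_eq_zero.mp (Nat.le_zero.mp hS)
        have := congrArg (·ᶜ) h0
        simpa using this
      subst hSu
      exact hbase U W hU
    | succ t iht =>
      intro U W S hS hW hU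
      by_cases hSu : S = Finset.univ
      · subst hSu; exact hbase U W hU
      · obtain ⟨j, hj⟩ : ∃ j, j ∉ S := by
          by_contra h
          push_neg at h
          exact hSu (Finset.eq_univ_iff_forall.mpr h)
        have hD : d * e ^ (m + 1) ≠ 0 := mul_ne_zero hd (pow_ne_zero _ he)
        set M : Matrix (Fin (m + 1)) (Fin (m + 1)) (RatFunc k) :=
          fun r j' => if j' ∈ S then U r j' else U r j' + W r j' with hMdef
        have hcol : (fun r => M r j) = (fun r => U r j) + fun r => W r j := by
          funext r
          simp [hMdef, if_neg hj]
        have hsplit : M.det = (M.updateCol j fun r => U r j).det +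
            (M.updateCol j fun r => W r j).det := by
          conv_lhs => rw [← Matrix.updateCol_eq_self M j, hcol,
            Matrix.det_updateCol_add]
        rw [hsplit]
        apply denom_add_dvd_of_dvd hD
        · -- column j resolved to the `U` part
          have hb : M.updateCol j (fun r => U r j) =
              fun r c => if c ∈ insert j S then U r c else U r c + W r c := by
            funext r c
            by_cases hc : c = j
            · subst hc
              simp [Matrix.updateCol_self]
            · rw [Matrix.updateCol_ne hc]
              simp [hMdef, Finset.mem_insert, hc]
          rw [hb]
          refine iht U W (insert j S) ?_ hW hU
          rw [Finset.compl_insert, Finset.card_erase_of_mem (Finset.mem_compl.mpr hj)]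
          omega
        · -- column j resolved to the `W` part: expand along column j
          rw [Matrix.det_succ_column (M.updateCol j fun r => W r j) j]
          apply denom_sum_dvd _ _ hD
          intro r _
          have hWr : (M.updateCol j fun r => W r j) r j = W r j :=
            Matrix.updateCol_self
          -- the submatrix is again of mixed form
          have hsub : ((M.updateCol j fun r => W r j).submatrix r.succAbove j.succAbove) =
              fun r' c' => if c' ∈ Finset.univ.filter (fun c' => j.succAbove c' ∈ S)
                then U (r.succAbove r') (j.succAbove c')
                else U (r.succAbove r') (j.succAbove c') + W (r.succAbove r') (j.succAbove c') := by
            funext r' c'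
            have hne : j.succAbove c' ≠ j := Fin.succAbove_ne j c'
            rw [Matrix.submatrix_apply, Matrix.updateCol_ne hne]
            simp [hMdef]
          have hsubdvd : ((M.updateCol j fun r => W r j).submatrix r.succAbove
              j.succAbove).det.denom ∣ d * e ^ m := by
            rw [hsub]
            refine ih m (fun a b => U (r.succAbove a) (j.succAbove b))
              (fun a b => W (r.succAbove a) (j.succAbove b))
              (Finset.univ.filter (fun c' => j.succAbove c' ∈ S)) ?_ (fun _ _ => hW _ _) ?_
            · calc _ ≤ Finset.univ.card := Finset.card_le_univ _
                _ = m := by simp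
            · intro i f g
              exact hU i (f.trans r.succAboveEmb) (g.trans j.succAboveEmb)
          have hsgn : ((-1 : RatFunc k) ^ ((r : ℕ) + (j : ℕ))) =
              algebraMap (Polynomial k) (RatFunc k) ((-1) ^ ((r : ℕ) + (j : ℕ))) := by
            simp
          rw [hWr]
          calc ((-1 : RatFunc k) ^ ((r : ℕ) + (j : ℕ)) * W r j *
                ((M.updateCol j fun r => W r j).submatrix r.succAbove j.succAbove).det).denom
              = (algebraMap (Polynomial k) (RatFunc k) ((-1) ^ ((r : ℕ) + (j : ℕ))) *
                (W r j * ((M.updateCol j fun r => W r j).submatrix r.succAbove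
                  j.succAbove).det)).denom := by rw [← hsgn, mul_assoc]
            _ ∣ (W r j * ((M.updateCol j fun r => W r j).submatrix r.succAbove
                  j.succAbove).det).denom := denom_algebraMap_mul_dvd _ _
            _ ∣ (W r j).denom * ((M.updateCol j fun r => W r j).submatrix r.succAbove
                  j.succAbove).det.denom := RatFunc.denom_mul_dvd _ _
            _ ∣ e * (d * e ^ m) := mul_dvd_mul (hW r j) hsubdvd
            _ = d * e ^ (m + 1) := by ring

lemma detDen_add_dvd {n p : ℕ} (A B : Matrix (Fin n) (Fin p) (RatFunc k)) {ℓ : ℕ}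
    (hℓ : 1 ≤ ℓ) : detDen (A + B) ℓ ∣ detDen A ℓ * detDen B 1 ^ ℓ := by
  apply Finset.lcm_dvd
  intro i hi
  apply Finset.lcm_dvd
  rintro ⟨f, g⟩ -
  have hi' : i ≤ ℓ := Nat.lt_succ_iff.mp (Finset.mem_range.mp hi)
  have hM : (fun a b => (A + B) (f a) (g b)) =
      fun r j => if j ∈ (∅ : Finset (Fin i))
        then A (f r) (g j) else A (f r) (g j) + B (f r) (g j) := by
    funext a b
    simp [Matrix.add_apply]
  have key := denom_det_mix_dvd (detDen A ℓ) (detDen B 1) (detDen_ne_zero A ℓ)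
    (detDen_ne_zero B 1) i i (fun a b => A (f a) (g b)) (fun a b => B (f a) (g b))
    (∅ : Finset (Fin i)) (by simp) (fun r j => detDen_entry_dvd B (f r) (g j))
    (fun i' f' g' => by
      have hle : i' ≤ i := by
        have := Fintype.card_le_of_embedding f'
        simpa using this
      exact denom_minor_dvd A (hle.trans hi') (f'.trans f) (g'.trans g))
  rw [hM]
  exact key.trans (mul_dvd_mul_left _ (pow_dvd_pow _ hi'))

lemma detDen_level_zero {n p : ℕ} (R : Matrix (Fin n) (Fin p) (RatFunc k)) :
    detDen R 0 = 1 := by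
  have h1 : detDen R 0 ∣ 1 := by
    apply Finset.lcm_dvd
    intro i hi
    apply Finset.lcm_dvd
    rintro ⟨f, g⟩ -
    have : i = 0 := Nat.lt_one_iff.mp (Finset.mem_range.mp hi)
    subst this
    erw [Matrix.det_fin_zero]
    simp
  rw [← normalize_detDen R 0, normalize_eq_one]
  exact isUnit_of_dvd_one h1

lemma detDen_zero_matrix {n p : ℕ} (ℓ : ℕ) :
    detDen (0 : Matrix (Fin n) (Fin p) (RatFunc k)) ℓ = 1 := by
  have h1 : detDen (0 : Matrix (Fin n) (Fin p) (RatFunc k)) ℓ ∣ 1 := by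
    apply Finset.lcm_dvd
    intro i _
    apply Finset.lcm_dvd
    rintro ⟨f, g⟩ -
    rcases Nat.eq_zero_or_pos i with rfl | hi
    · erw [Matrix.det_fin_zero]
      simp
    · have hz : (Matrix.det fun a b => (0 : Matrix (Fin n) (Fin p) (RatFunc k)) (f a) (g b)) =
          0 := by
        have : (fun a b => (0 : Matrix (Fin n) (Fin p) (RatFunc k)) (f a) (g b)) =
            (0 : Matrix (Fin i) (Fin i) (RatFunc k)) := rfl
        rw [this]
        haveI : Nonempty (Fin i) := ⟨⟨0, hi⟩⟩; exact Matrix.det_zero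
      rw [hz, RatFunc.denom_zero]
  rw [← normalize_detDen _ ℓ, normalize_eq_one]
  exact isUnit_of_dvd_one h1

lemma detDen_neg {n p : ℕ} (B : Matrix (Fin n) (Fin p) (RatFunc k)) (ℓ : ℕ) :
    detDen (-B) ℓ = detDen B ℓ := by
  have hfun : ∀ (i : ℕ) (fg : (Fin i ↪ Fin n) × (Fin i ↪ Fin p)),
      (Matrix.det fun a b => (-B) (fg.1 a) (fg.2 b)).denom =
      (Matrix.det fun a b => B (fg.1 a) (fg.2 b)).denom := by
    intro i fg
    have h : (fun a b => (-B) (fg.1 a) (fg.2 b)) =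
        -(fun a b => B (fg.1 a) (fg.2 b) : Matrix (Fin i) (Fin i) (RatFunc k)) := by
      funext a b
      simp [Matrix.neg_apply]
    rw [h]; erw [Matrix.det_neg]
    rcases Nat.even_or_odd i with he | ho
    · simp [Fintype.card_fin, he.neg_one_pow]
    · simp [Fintype.card_fin, ho.neg_one_pow, neg_one_mul, denom_neg']
  unfold detDen
  congr 1
  funext i
  congr 1
  funext fg
  exact hfun i fg

lemma detDen_dvd_pow {n p : ℕ} (A : Matrix (Fin n) (Fin p) (RatFunc k)) {ℓ : ℕ}
    (hℓ : 1 ≤ ℓ) : detDen A ℓ ∣ detDen A 1 ^ ℓ := by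
  have h := detDen_add_dvd (0 : Matrix (Fin n) (Fin p) (RatFunc k)) A hℓ
  rwa [zero_add, detDen_zero_matrix, one_mul] at h

end Aux

/-- If `R = R1 + R2` and the first determinantal denominators `φ_1(R1)`, `φ_1(R2)` are
coprime, then `φ_ℓ(R) = φ_ℓ(R1) * φ_ℓ(R2)` for all `ℓ`. -/
theorem detDen_add_eq_of_coprime {n p : ℕ} (R R1 R2 : Matrix (Fin n) (Fin p) (RatFunc k))
    (hR : R = R1 + R2) (hcop : IsCoprime (detDen R1 1) (detDen R2 1)) (ℓ : ℕ) :
    detDen R ℓ = detDen R1 ℓ * detDen R2 ℓ := by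
  rcases Nat.eq_zero_or_pos ℓ with rfl | hℓ
  · rw [detDen_level_zero, detDen_level_zero, detDen_level_zero, one_mul]
  · have hF1 : detDen R ℓ ∣ detDen R1 ℓ * detDen R2 1 ^ ℓ := by
      rw [hR]; exact detDen_add_dvd R1 R2 hℓ
    have hF2 : detDen R ℓ ∣ detDen R2 ℓ * detDen R1 1 ^ ℓ := by
      rw [hR, add_comm]; exact detDen_add_dvd R2 R1 hℓ
    have hF3 : detDen R1 ℓ ∣ detDen R ℓ * detDen R2 1 ^ ℓ := by
      have h := detDen_add_dvd R (-R2) hℓ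
      rw [detDen_neg] at h
      have hR1 : R + -R2 = R1 := by rw [hR]; abel
      rwa [hR1] at h
    have hF4 : detDen R2 ℓ ∣ detDen R ℓ * detDen R1 1 ^ ℓ := by
      have h := detDen_add_dvd R (-R1) hℓ
      rw [detDen_neg] at h
      have hR2 : R + -R1 = R2 := by rw [hR]; abel
      rwa [hR2] at h
    have hpow1 : detDen R1 ℓ ∣ detDen R1 1 ^ ℓ := detDen_dvd_pow R1 hℓ
    have hpow2 : detDen R2 ℓ ∣ detDen R2 1 ^ ℓ := detDen_dvd_pow R2 hℓ
    have hcop_pow : IsCoprime (detDen R1 1 ^ ℓ) (detDen R2 1 ^ ℓ) := hcop.pow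
    have hdvd1 : detDen R1 ℓ ∣ detDen R ℓ :=
      (hcop_pow.of_isCoprime_of_dvd_left hpow1).dvd_of_dvd_mul_right hF3
    have hdvd2 : detDen R2 ℓ ∣ detDen R ℓ :=
      (hcop_pow.symm.of_isCoprime_of_dvd_left hpow2).dvd_of_dvd_mul_right hF4
    have hcopℓ : IsCoprime (detDen R1 ℓ) (detDen R2 ℓ) :=
      ((hcop_pow.of_isCoprime_of_dvd_left hpow1).symm.of_isCoprime_of_dvd_left hpow2).symm
    have hmul : detDen R1 ℓ * detDen R2 ℓ ∣ detDen R ℓ := hcopℓ.mul_dvd hdvd1 hdvd2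
    have hprod : detDen R ℓ ∣ detDen R1 1 ^ ℓ * detDen R2 1 ^ ℓ :=
      hF1.trans (mul_dvd_mul_right hpow1 _)
    obtain ⟨x, y, hx, hy, hxy⟩ := exists_dvd_and_dvd_of_dvd_mul hprod
    have hxc : x ∣ detDen R ℓ := ⟨y, hxy⟩
    have hyc : y ∣ detDen R ℓ := ⟨x, by rw [hxy]; ring⟩
    have hxa : x ∣ detDen R1 ℓ :=
      (hcop_pow.of_isCoprime_of_dvd_left hx).dvd_of_dvd_mul_right (hxc.trans hF1)
    have hyb : y ∣ detDen R2 ℓ :=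
      (hcop_pow.symm.of_isCoprime_of_dvd_left hy).dvd_of_dvd_mul_right (hyc.trans hF2)
    have hmul' : detDen R ℓ ∣ detDen R1 ℓ * detDen R2 ℓ := by
      rw [hxy]; exact mul_dvd_mul hxa hyb
    refine dvd_antisymm_of_normalize_eq (normalize_detDen R ℓ) ?_ hmul' hmul
    classical
    exact Polynomial.Monic.normalize_eq_self (Polynomial.Monic.mul
      ((normalize_eq_self_iff_monic (detDen_ne_zero R1 ℓ)).mp (normalize_detDen R1 ℓ))
      ((normalize_eq_self_iff_monic (detDen_ne_zero R2 ℓ)).mp (normalize_detDen R2 ℓ)))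

end
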